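/- Let X be a topological vector space over ℝ which is a Baire space. Then the Kuczma–Ger classes 𝓐_X and 𝓑_X coincide: for every subset A ⊆ X, the following are equivalent: (i) every mid-convex function f : D → ℝ defined on an open convex set D ⊆ X with A ⊆ D and sup f[A] < ∞ is continuous on D; (ii) every additive function f : X → ℝ with sup f[A] < ∞ is continuous. -/

import Mathlib

open Set Filter Topology Finset Pointwise

section RatConv
variable {X : Type*} [AddCommGroup X] [Module ℝ X] {D : Set X} {f : X → ℝ}

lemma sum_ite_block {M : Type*} [AddCommMonoid M] (u v : M) (a c : ℕ) :
    ∑ i ∈ Finset.range (a + c), (if i < a then u else v) = a • u + c • v := by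
  induction c with
  | zero =>
    rw [Nat.add_zero]
    have h : ∀ i ∈ Finset.range a, (if i < a then u else v) = u :=
      fun i hi => if_pos (Finset.mem_range.1 hi)
    rw [Finset.sum_congr rfl h, Finset.sum_const, Finset.card_range]
    simp
  | succ c ih =>
    rw [show a + (c + 1) = (a + c) + 1 by omega, Finset.sum_range_succ, ih,
      if_neg (by omega), succ_nsmul]
    abel

/-- Equal weight Jensen inequality for midconvex functions. -/
lemma midconvex_jensen (hD : Convex ℝ D)
    (hf : ∀ x ∈ D, ∀ y ∈ D, f (((1 : ℝ) / 2) • (x + y)) ≤ (f x + f y) / 2) :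
    ∀ n : ℕ, 0 < n → ∀ z : ℕ → X, (∀ i < n, z i ∈ D) →
      f ((1 / n : ℝ) • ∑ i ∈ range n, z i) ≤ (1 / n : ℝ) * ∑ i ∈ range n, f (z i) := by
  set P : ℕ → Prop := fun n => 0 < n → ∀ z : ℕ → X, (∀ i < n, z i ∈ D) →
      f ((1 / n : ℝ) • ∑ i ∈ range n, z i) ≤ (1 / n : ℝ) * ∑ i ∈ range n, f (z i) with hP
  have hmean : ∀ n : ℕ, 0 < n → ∀ z : ℕ → X, (∀ i < n, z i ∈ D) →
      ((1 / n : ℝ) • ∑ i ∈ range n, z i) ∈ D := by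
    intro n hn z hz
    have := hD.sum_mem (t := range n) (w := fun _ => (1 / n : ℝ)) (z := z)
      (fun i _ => by positivity)
      (by simp [Finset.sum_const, mul_inv_cancel₀ (by exact_mod_cast hn.ne' : (n:ℝ) ≠ 0)])
      (fun i hi => hz i (Finset.mem_range.1 hi))
    simpa [Finset.smul_sum] using this
  have hdouble : ∀ n, P n → P (2 * n) := by
    intro n ihn hn2 z hz
    have hn : 0 < n := by omega
    have hsplit : ∑ i ∈ range (2 * n), z i
        = (∑ i ∈ range n, z i) + ∑ i ∈ range n, z (n + i) := by
      rw [two_mul, Finset.sum_range_add]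
    have hsplitf : ∑ i ∈ range (2 * n), f (z i)
        = (∑ i ∈ range n, f (z i)) + ∑ i ∈ range n, f (z (n + i)) := by
      rw [two_mul, Finset.sum_range_add]
    set m₁ := (1 / n : ℝ) • ∑ i ∈ range n, z i with hm₁
    set m₂ := (1 / n : ℝ) • ∑ i ∈ range n, z (n + i) with hm₂
    have hm₁D : m₁ ∈ D := hmean n hn z (fun i hi => hz i (by omega))
    have hm₂D : m₂ ∈ D := hmean n hn (fun i => z (n + i)) (fun i hi => hz _ (by omega))
    have key : f (((1:ℝ)/2) • (m₁ + m₂)) ≤ (f m₁ + f m₂) / 2 := hf _ hm₁D _ hm₂D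
    have h1 : f m₁ ≤ (1 / n : ℝ) * ∑ i ∈ range n, f (z i) :=
      ihn hn z (fun i hi => hz i (by omega))
    have h2 : f m₂ ≤ (1 / n : ℝ) * ∑ i ∈ range n, f (z (n + i)) :=
      ihn hn _ (fun i hi => hz _ (by omega))
    have harg : (1 / (2 * n : ℕ) : ℝ) • ∑ i ∈ range (2 * n), z i
        = ((1:ℝ)/2) • (m₁ + m₂) := by
      rw [hsplit, hm₁, hm₂]
      push_cast
      module
    rw [harg, hsplitf]
    calc f (((1:ℝ)/2) • (m₁ + m₂)) ≤ (f m₁ + f m₂) / 2 := key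
      _ ≤ ((1 / n : ℝ) * ∑ i ∈ range n, f (z i)
            + (1 / n : ℝ) * ∑ i ∈ range n, f (z (n + i))) / 2 := by linarith
      _ = (1 / (2*n : ℕ) : ℝ) * ((∑ i ∈ range n, f (z i)) + ∑ i ∈ range n, f (z (n+i))) := by
          have h2n : ((2*n : ℕ):ℝ) = 2*(n:ℝ) := by push_cast; ring
          rw [h2n, one_div, one_div, mul_inv]
          ring
  have hdown : ∀ n, P (n + 1) → P n := by
    intro n ihn hn z hz
    set m := (1 / n : ℝ) • ∑ i ∈ range n, z i with hm
    have hmD : m ∈ D := hmean n hn z hz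
    set z' : ℕ → X := fun i => if i < n then z i else m with hz'
    have hz'D : ∀ i < n + 1, z' i ∈ D := by
      intro i hi
      by_cases h : i < n <;> simp [hz', h, hmD]
      exact hz i h
    have hsum : ∑ i ∈ range (n+1), z' i = (∑ i ∈ range n, z i) + m := by
      rw [Finset.sum_range_succ]
      congr 1
      · exact Finset.sum_congr rfl fun i hi => by
          simp [hz', Finset.mem_range.1 hi]
      · simp [hz']
    have hsumf : ∑ i ∈ range (n+1), f (z' i) = (∑ i ∈ range n, f (z i)) + f m := by
      rw [Finset.sum_range_succ]
      congr 1
      · exact Finset.sum_congr rfl fun i hi => by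
          simp [hz', Finset.mem_range.1 hi]
      · simp [hz']
    have hnR : (n : ℝ) ≠ 0 := by exact_mod_cast hn.ne'
    have hzsum : ∑ i ∈ range n, z i = (n : ℝ) • m := by
      rw [hm, smul_smul]
      field_simp
      rw [one_smul]
    have harg : (1 / (n+1 : ℕ) : ℝ) • ∑ i ∈ range (n+1), z' i = m := by
      rw [hsum, hzsum]
      push_cast
      match_scalars
      field_simp
    have h := ihn (by omega) z' hz'D
    rw [harg, hsumf] at h
    push_cast at h ⊢
    rw [div_mul_eq_mul_div, le_div_iff₀ (by positivity)] at h ⊢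
    nlinarith [(Nat.cast_pos.mpr hn : (0:ℝ) < n)]
  -- descent
  have hdesc : ∀ j m, P (m + j) → P m := by
    intro j
    induction j with
    | zero => intro m h; simpa using h
    | succ j ih =>
      intro m h
      exact hdown m (ih (m+1) (by rw [show m + 1 + j = m + (j+1) by omega]; exact h))
  have hpow : ∀ k, P (2 ^ k) := by
    intro k
    induction k with
    | zero =>
      intro _ z hz
      simp only [pow_zero, Finset.sum_range_one, Nat.cast_one]
      norm_num
    | succ k ih =>
      have := hdouble (2 ^ k) ih
      rwa [show 2 * 2 ^ k = 2 ^ (k+1) by ring] at this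
  intro n hn z hz
  have hle : n ≤ 2 ^ n := Nat.le_of_lt (Nat.lt_two_pow_self (n := n))
  exact hdesc (2 ^ n - n) n (by rw [show n + (2^n - n) = 2^n by omega]; exact hpow n) hn z hz


/-- Mid-convex functions are rationally convex. -/
lemma midconvex_rat (hD : Convex ℝ D)
    (hf : ∀ x ∈ D, ∀ y ∈ D, f (((1 : ℝ) / 2) • (x + y)) ≤ (f x + f y) / 2)
    {q : ℚ} (h0 : 0 ≤ q) (h1 : q ≤ 1) {x y : X} (hx : x ∈ D) (hy : y ∈ D) :
    f ((q:ℝ) • x + (1 - (q:ℝ)) • y) ≤ (q:ℝ) * f x + (1 - (q:ℝ)) * f y := by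
  set a : ℕ := q.num.toNat with ha
  set b : ℕ := q.den with hb
  have hbpos : 0 < b := q.pos
  have hbR : (0:ℝ) < (b:ℝ) := by exact_mod_cast hbpos
  have hqcast : (q:ℝ) = (a:ℝ) / (b:ℝ) := by
    have hnum : ((q.num : ℤ) : ℝ) = (a : ℝ) := by
      rw [ha]
      norm_cast
      exact (Int.toNat_of_nonneg (Rat.num_nonneg.mpr h0)).symm
    rw [Rat.cast_def, hnum, hb]
  have hab : a ≤ b := by
    have hq1 : (q:ℝ) ≤ 1 := by exact_mod_cast h1
    rw [hqcast, div_le_one hbR] at hq1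
    exact_mod_cast hq1
  set c : ℕ := b - a with hc
  have hbc : b = a + c := by omega
  have hcR : (c:ℝ) = (b:ℝ) - (a:ℝ) := by
    rw [hc]; push_cast [Nat.cast_sub hab]; ring
  set z : ℕ → X := fun i => if i < a then x else y with hz
  have hzD : ∀ i < b, z i ∈ D := by
    intro i hi
    by_cases h : i < a <;> simp [hz, h, hx, hy]
  have hjen := midconvex_jensen hD hf b hbpos z hzD
  have hsum : ∑ i ∈ Finset.range b, z i = a • x + c • y := by
    rw [hbc]; exact sum_ite_block x y a c
  have hsumf : ∑ i ∈ Finset.range b, f (z i) = a • f x + c • f y := by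
    have : ∀ i, f (z i) = if i < a then f x else f y := by
      intro i; rw [hz]; simp only; split <;> rfl
    rw [Finset.sum_congr rfl (fun i _ => this i), hbc]
    exact sum_ite_block (f x) (f y) a c
  rw [hsum, hsumf] at hjen
  have harg : (1 / (b:ℝ)) • (a • x + c • y) = (q:ℝ) • x + (1 - (q:ℝ)) • y := by
    rw [← Nat.cast_smul_eq_nsmul ℝ a x, ← Nat.cast_smul_eq_nsmul ℝ c y,
      smul_add, smul_smul, smul_smul]
    congr 1
    · congr 1
      rw [hqcast]; field_simp
    · congr 1
      rw [hqcast, hcR]; field_simp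
  have hval : (1 / (b:ℝ)) * ((a • f x : ℝ) + c • f y) = (q:ℝ) * f x + (1 - (q:ℝ)) * f y := by
    rw [nsmul_eq_mul, nsmul_eq_mul, hqcast, hcR]
    field_simp
  rw [harg, hval] at hjen
  exact hjen

end RatConv

section Support
variable {X : Type*} [AddCommGroup X] [Module ℝ X] [TopologicalSpace X]
  [IsTopologicalAddGroup X] [ContinuousSMul ℝ X] {D : Set X} {f : X → ℝ}

theorem exists_additive_support (hDo : IsOpen D) (hDc : Convex ℝ D)
    (hrat : ∀ (q : ℚ), 0 ≤ q → q ≤ 1 → ∀ x ∈ D, ∀ y ∈ D,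
      f ((q:ℝ) • x + (1 - (q:ℝ)) • y) ≤ (q:ℝ) * f x + (1 - (q:ℝ)) * f y)
    {x0 : X} (hx0 : x0 ∈ D) :
    ∃ g : X → ℝ, (∀ u v, g (u + v) = g u + g v) ∧ ∀ x ∈ D, f x0 + g (x - x0) ≤ f x := by
  classical
  -- the set of admissible rational step sizes
  set S : X → Set ℚ := fun x => {q : ℚ | 0 < q ∧ x0 + (q:ℝ) • x ∈ D} with hS
  set slope : X → ℚ → ℝ := fun x q => (f (x0 + (q:ℝ) • x) - f x0) / q with hslope
  -- nonemptiness
  have hSne : ∀ x : X, (S x).Nonempty := by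
    intro x
    have hc : Continuous (fun r : ℝ => x0 + r • x) :=
      continuous_const.add (continuous_id.smul continuous_const)
    have hopen : IsOpen ((fun r : ℝ => x0 + r • x) ⁻¹' D) := hDo.preimage hc
    have h0 : (0:ℝ) ∈ (fun r : ℝ => x0 + r • x) ⁻¹' D := by simpa using hx0
    obtain ⟨ε, hε, hball⟩ := Metric.isOpen_iff.1 hopen 0 h0
    obtain ⟨q, hq0, hqε⟩ := exists_rat_btwn hε
    refine ⟨q, by exact_mod_cast hq0, ?_⟩
    have : (q:ℝ) ∈ Metric.ball (0:ℝ) ε := by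
      rw [Metric.mem_ball, Real.dist_eq, sub_zero,
        abs_of_pos (show (0:ℝ) < q by exact_mod_cast hq0)]
      exact hqε
    exact hball this
  -- downward closedness
  have hdown : ∀ x : X, ∀ q ∈ S x, ∀ q' : ℚ, 0 < q' → q' ≤ q → q' ∈ S x := by
    intro x q hq q' hq'0 hq'q
    refine ⟨hq'0, ?_⟩
    have hq0 : (0:ℝ) < (q:ℝ) := by exact_mod_cast hq'0.trans_le hq'q
    set t : ℝ := (q':ℝ) / (q:ℝ) with ht
    have ht0 : 0 ≤ t := by positivity
    have ht1 : t ≤ 1 := by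
      rw [ht, div_le_one hq0]; exact_mod_cast hq'q
    have := hDc hx0 hq.2 (by linarith : (0:ℝ) ≤ 1 - t) ht0 (by ring)
    have harg : (1 - t) • x0 + t • (x0 + (q:ℝ) • x) = x0 + (q':ℝ) • x := by
      rw [smul_add, smul_smul]
      have : t * (q:ℝ) = (q':ℝ) := by rw [ht]; field_simp
      rw [this]
      module
    rwa [harg] at this
  -- slope monotonicity
  have hmono : ∀ x : X, ∀ q1 ∈ S x, ∀ q2 ∈ S x, q1 ≤ q2 → slope x q1 ≤ slope x q2 := by
    intro x q1 hq1 q2 hq2 h12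
    have hq10 : 0 < q1 := hq1.1
    have hq20 : 0 < q2 := hq2.1
    have hq1R : (0:ℝ) < (q1:ℝ) := by exact_mod_cast hq10
    have hq2R : (0:ℝ) < (q2:ℝ) := by exact_mod_cast hq20
    set lam : ℚ := q1 / q2 with hlam
    have hlam0 : 0 ≤ lam := by positivity
    have hlam1 : lam ≤ 1 := by
      rw [hlam, div_le_one hq20]; exact h12
    have key := hrat lam hlam0 hlam1 _ hq2.2 _ hx0
    have harg : (lam:ℝ) • (x0 + (q2:ℝ) • x) + (1 - (lam:ℝ)) • x0 = x0 + (q1:ℝ) • x := by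
      rw [smul_add, smul_smul]
      have : (lam:ℝ) * (q2:ℝ) = (q1:ℝ) := by
        rw [hlam]; push_cast; field_simp
      rw [this]
      module
    rw [harg] at key
    have hlamval : (lam:ℝ) = (q1:ℝ) / (q2:ℝ) := by rw [hlam]; push_cast; ring
    rw [hslope]
    simp only
    rw [div_le_div_iff₀ hq1R hq2R]
    have : f (x0 + (q1:ℝ) • x) - f x0 ≤ ((q1:ℝ)/(q2:ℝ)) * (f (x0 + (q2:ℝ) • x) - f x0) := by
      rw [hlamval] at key; nlinarith
    have h2 : ((q1:ℝ)/(q2:ℝ)) * (f (x0 + (q2:ℝ) • x) - f x0) * (q2:ℝ)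
        = (f (x0 + (q2:ℝ) • x) - f x0) * (q1:ℝ) := by field_simp
    nlinarith
  -- opposite slope bound
  have hopp : ∀ x : X, ∀ q : ℚ, q ∈ S x → q ∈ S (-x) → 0 ≤ slope x q + slope (-x) q := by
    intro x q hq hq'
    have hqR : (0:ℝ) < (q:ℝ) := by exact_mod_cast hq.1
    have key := hrat (1/2) (by norm_num) (by norm_num) _ hq.2 _ hq'.2
    have harg : ((1/2 : ℚ):ℝ) • (x0 + (q:ℝ) • x) + (1 - ((1/2:ℚ):ℝ)) • (x0 + (q:ℝ) • (-x)) = x0 := by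
      push_cast
      module
    rw [harg] at key
    rw [hslope]
    simp only
    rw [div_add_div _ _ (ne_of_gt hqR) (ne_of_gt hqR)]
    apply div_nonneg _ (by positivity)
    push_cast at key
    nlinarith
  -- common admissible scale
  have hScommon : ∀ x y : X, ∃ q : ℚ, q ∈ S x ∧ q ∈ S y := by
    intro x y
    obtain ⟨q1, hq1⟩ := hSne x
    obtain ⟨q2, hq2⟩ := hSne y
    refine ⟨min q1 q2, hdown x q1 hq1 _ (lt_min hq1.1 hq2.1) (min_le_left _ _),
      hdown y q2 hq2 _ (lt_min hq1.1 hq2.1) (min_le_right _ _)⟩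
  -- boundedness below of slopes
  have hbdd : ∀ x : X, BddBelow (slope x '' S x) := by
    intro x
    obtain ⟨q0, hq0x, hq0x'⟩ := hScommon x (-x)
    refine ⟨-slope (-x) q0, ?_⟩
    rintro r ⟨q, hq, rfl⟩
    rcases le_total q q0 with h | h
    · have hqS' : q ∈ S (-x) := hdown (-x) q0 hq0x' q hq.1 h
      have h1 := hopp x q hq hqS'
      have h2 := hmono (-x) q hqS' q0 hq0x' h
      linarith
    · have h1 := hmono x q0 hq0x q hq h
      have h2 := hopp x q0 hq0x hq0x'
      linarith
  have hSneI : ∀ x : X, (slope x '' S x).Nonempty := fun x => (hSne x).image _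
  set p : X → ℝ := fun x => sInf (slope x '' S x) with hp
  have hple : ∀ x : X, ∀ q ∈ S x, p x ≤ slope x q := fun x q hq =>
    csInf_le (hbdd x) ⟨q, hq, rfl⟩
  have hpexists : ∀ x : X, ∀ ε > 0, ∃ q ∈ S x, slope x q < p x + ε := by
    intro x ε hε
    obtain ⟨r, ⟨q, hq, rfl⟩, hr⟩ := exists_lt_of_csInf_lt (hSneI x) (by linarith : p x < p x + ε)
    exact ⟨q, hq, hr⟩
  -- subadditivity of p
  have hpsub : ∀ x y : X, p (x + y) ≤ p x + p y := by
    intro x y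
    refine le_of_forall_pos_le_add ?_
    intro ε hε
    obtain ⟨q1, hq1, hq1'⟩ := hpexists x (ε/2) (by linarith)
    obtain ⟨q2, hq2, hq2'⟩ := hpexists y (ε/2) (by linarith)
    set r : ℚ := min q1 q2 with hr
    have hr0 : 0 < r := lt_min hq1.1 hq2.1
    have hrx : r ∈ S x := hdown x q1 hq1 r hr0 (min_le_left _ _)
    have hry : r ∈ S y := hdown y q2 hq2 r hr0 (min_le_right _ _)
    have hrR : (0:ℝ) < (r:ℝ) := by exact_mod_cast hr0
    have hmid : x0 + ((r/2 : ℚ):ℝ) • (x + y)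
        = ((1/2 : ℝ)) • ((x0 + (r:ℝ) • x) + (x0 + (r:ℝ) • y)) := by
      push_cast
      module
    have hmemD : x0 + ((r/2 : ℚ):ℝ) • (x + y) ∈ D := by
      rw [hmid]
      have := hDc hrx.2 hry.2 (by norm_num : (0:ℝ) ≤ 1/2) (by norm_num : (0:ℝ) ≤ 1/2) (by norm_num)
      simpa [smul_add] using this
    have hrhalf : (r/2 : ℚ) ∈ S (x + y) := ⟨by positivity, hmemD⟩
    have key := hrat (1/2) (by norm_num) (by norm_num) _ hrx.2 _ hry.2
    have harg : ((1/2:ℚ):ℝ) • (x0 + (r:ℝ) • x) + (1 - ((1/2:ℚ):ℝ)) • (x0 + (r:ℝ) • y)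
        = x0 + ((r/2 : ℚ):ℝ) • (x + y) := by
      push_cast
      module
    rw [harg] at key
    have hhalf : ((1/2 : ℚ):ℝ) = (1/2 : ℝ) := by norm_num
    have hcast : ((r/2 : ℚ):ℝ) = (r:ℝ)/2 := by push_cast; ring
    rw [hhalf, hcast] at key
    have hslopes : slope (x+y) (r/2) ≤ slope x r + slope y r := by
      rw [hslope]
      simp only
      rw [hcast, div_add_div _ _ (ne_of_gt hrR) (ne_of_gt hrR),
        div_le_div_iff₀ (by linarith) (by nlinarith)]
      nlinarith [mul_le_mul_of_nonneg_right key (le_of_lt (mul_pos hrR hrR))]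
    have := hple (x+y) (r/2) hrhalf
    have hm1 := hmono x r hrx q1 hq1 (min_le_left _ _)
    have hm2 := hmono y r hry q2 hq2 (min_le_right _ _)
    linarith
  -- positive rational homogeneity of p
  have hphom : ∀ (c : ℚ), 0 < c → ∀ x : X, p ((c:ℝ) • x) = c * p x := by
    intro c hc x
    have hcR : (0:ℝ) < (c:ℝ) := by exact_mod_cast hc
    have himg : slope ((c:ℝ) • x) '' S ((c:ℝ) • x) = (c:ℝ) • (slope x '' S x) := by
      ext r
      constructor
      · rintro ⟨q, hq, rfl⟩
        refine ⟨slope x (q * c), ⟨q * c, ?_, rfl⟩, ?_⟩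
        · refine ⟨mul_pos hq.1 hc, ?_⟩
          have : x0 + ((q*c : ℚ):ℝ) • x = x0 + (q:ℝ) • ((c:ℝ) • x) := by
            push_cast; rw [smul_smul]
          rw [this]; exact hq.2
        · rw [hslope]
          simp only [smul_eq_mul]
          have h1 : x0 + ((q*c : ℚ):ℝ) • x = x0 + (q:ℝ) • ((c:ℝ) • x) := by
            push_cast; rw [smul_smul]
          rw [h1]
          have hqR : (0:ℝ) < (q:ℝ) := by exact_mod_cast hq.1
          push_cast
          field_simp
      · rintro ⟨r', ⟨q, hq, rfl⟩, rfl⟩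
        refine ⟨q / c, ⟨div_pos hq.1 hc, ?_⟩, ?_⟩
        · have : x0 + ((q/c : ℚ):ℝ) • ((c:ℝ) • x) = x0 + (q:ℝ) • x := by
            push_cast; rw [smul_smul]
            congr 2
            field_simp
          rw [this]; exact hq.2
        · rw [hslope]
          simp only [smul_eq_mul]
          have h1 : x0 + ((q/c : ℚ):ℝ) • ((c:ℝ) • x) = x0 + (q:ℝ) • x := by
            push_cast; rw [smul_smul]
            congr 2
            field_simp
          rw [h1]
          have hqR : (0:ℝ) < (q:ℝ) := by exact_mod_cast hq.1
          push_cast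
          field_simp
    rw [hp]
    simp only
    rw [himg, Real.sInf_smul_of_nonneg (le_of_lt hcR), smul_eq_mul]
  -- the family of sublinear minorants for Zorn's lemma
  set F : Set (X → ℝ) := {g | (∀ u v, g (u + v) ≤ g u + g v) ∧
      (∀ c : ℚ, 0 < c → ∀ u, g ((c:ℝ) • u) = (c:ℝ) * g u) ∧ ∀ u, g u ≤ p u} with hF
  have hpmem : p ∈ F := ⟨hpsub, fun c hc u => hphom c hc u, fun u => le_rfl⟩
  have hzero : ∀ g ∈ F, g 0 = 0 := by
    intro g hg
    have := hg.2.1 2 (by norm_num) 0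
    rw [smul_zero] at this
    push_cast at this
    linarith
  have hlb : ∀ g ∈ F, ∀ u, -p (-u) ≤ g u := by
    intro g hg u
    have h0 : g 0 = 0 := hzero g hg
    have h1 := hg.1 u (-u)
    rw [add_neg_cancel, h0] at h1
    have h2 := hg.2.2 (-u)
    linarith
  -- Zorn's lemma for a minimal element of F
  have hchainub : ∀ c : Set ((X → ℝ)ᵒᵈ), c ⊆ F → IsChain (· ≤ ·) c → ∀ y ∈ c,
      ∃ ub ∈ F, ∀ z ∈ c, z ≤ ub := by
    intro c hcF hchain g0 hg0c
    set lb : X → ℝ := fun u => sInf ((fun g : X → ℝ => g u) '' c) with hlbdef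
    have hne : ∀ u, ((fun g : X → ℝ => g u) '' c).Nonempty := fun u => ⟨g0 u, g0, hg0c, rfl⟩
    have hbddc : ∀ u, BddBelow ((fun g : X → ℝ => g u) '' c) := by
      intro u
      refine ⟨-p (-u), ?_⟩
      rintro r ⟨g, hgc, rfl⟩
      exact hlb g (hcF hgc) u
    have hlb_le : ∀ g ∈ c, ∀ u, lb u ≤ g u := fun g hgc u => csInf_le (hbddc u) ⟨g, hgc, rfl⟩
    have hexc : ∀ u, ∀ ε > (0:ℝ), ∃ g ∈ c, g u < lb u + ε := by
      intro u ε hε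
      obtain ⟨r, ⟨g, hgc, rfl⟩, hr⟩ := exists_lt_of_csInf_lt (hne u) (by linarith : lb u < lb u + ε)
      exact ⟨g, hgc, hr⟩
    refine ⟨lb, ⟨?_, ?_, ?_⟩, fun g hgc => ?_⟩
    · intro u v
      refine le_of_forall_pos_le_add ?_
      intro ε hε
      obtain ⟨g1, hg1c, hg1⟩ := hexc u (ε/2) (by linarith)
      obtain ⟨g2, hg2c, hg2⟩ := hexc v (ε/2) (by linarith)
      rcases eq_or_ne g1 g2 with rfl | hne12
      · have := (hcF hg1c).1 u v
        have h3 := hlb_le g1 hg1c (u + v)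
        linarith
      · rcases hchain hg1c hg2c hne12 with h | h
        · -- g1 ≤ g2 in dual order, i.e. g2 ≤ g1 pointwise
          have h' : ∀ w, g2 w ≤ g1 w := fun w => h w
          have := (hcF hg2c).1 u v
          have h3 := hlb_le g2 hg2c (u + v)
          have h4 := h' u
          linarith
        · have h' : ∀ w, g1 w ≤ g2 w := fun w => h w
          have := (hcF hg1c).1 u v
          have h3 := hlb_le g1 hg1c (u + v)
          have h4 := h' v
          linarith
    · intro c' hc' u
      have himg : ((fun g : X → ℝ => g ((c':ℝ) • u)) '' c)
          = (c':ℝ) • ((fun g : X → ℝ => g u) '' c) := by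
        ext r
        constructor
        · rintro ⟨g, hgc, rfl⟩
          exact ⟨g u, ⟨g, hgc, rfl⟩, ((hcF hgc).2.1 c' hc' u).symm⟩
        · rintro ⟨r', ⟨g, hgc, rfl⟩, rfl⟩
          exact ⟨g, hgc, (hcF hgc).2.1 c' hc' u⟩
      rw [hlbdef]
      simp only
      rw [himg, Real.sInf_smul_of_nonneg (by positivity), smul_eq_mul]
    · intro u
      exact le_trans (hlb_le g0 hg0c u) ((hcF hg0c).2.2 u)
    · show lb ≤ _
      exact fun u => hlb_le g hgc u
  obtain ⟨m, -, hmF, hmmin'⟩ := zorn_le_nonempty₀ (α := (X → ℝ)ᵒᵈ) F hchainub p hpmem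
  have hmmin : ∀ b ∈ F, (∀ u, b u ≤ m u) → ∀ u, m u ≤ b u := by
    intro b hb hbm
    exact fun u => by exact hmmin' hb (by exact fun u => hbm u) u
  have hm1 : ∀ u v, m (u + v) ≤ m u + m v := hmF.1
  have hm2 : ∀ c : ℚ, 0 < c → ∀ u, m ((c:ℝ) • u) = (c:ℝ) * m u := hmF.2.1
  have hm3 : ∀ u, m u ≤ p u := hmF.2.2
  have hm0 : m 0 = 0 := hzero m hmF
  -- minimality implies m is additive
  have hneg : ∀ y : X, m (-y) ≤ -(m y) := by
    intro y
    have hmt : ∀ t : ℚ, 0 ≤ t → m ((t:ℝ) • y) = (t:ℝ) * m y := by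
      intro t ht
      rcases eq_or_lt_of_le ht with rfl | ht'
      · simp [hm0]
      · exact hm2 t ht' y
    set Q : X → ℝ := fun x =>
      sInf ((fun t : ℚ => m (x + (t:ℝ) • y) - (t:ℝ) * m y) '' {t : ℚ | 0 ≤ t}) with hQdef
    have hQne : ∀ x, ((fun t : ℚ => m (x + (t:ℝ) • y) - (t:ℝ) * m y) '' {t : ℚ | 0 ≤ t}).Nonempty :=
      fun x => ⟨m x, 0, by simp, by push_cast; simp⟩
    have hQbdd : ∀ x, BddBelow ((fun t : ℚ => m (x + (t:ℝ) • y) - (t:ℝ) * m y) '' {t : ℚ | 0 ≤ t}) := by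
      intro x
      refine ⟨-m (-x), ?_⟩
      rintro r ⟨t, ht, rfl⟩
      have h1 : m ((t:ℝ) • y) ≤ m (x + (t:ℝ) • y) + m (-x) := by
        have := hm1 (x + (t:ℝ) • y) (-x)
        rw [show x + (t:ℝ) • y + -x = (t:ℝ) • y by abel] at this
        exact this
      rw [hmt t ht] at h1
      simp only
      linarith
    have hQle : ∀ x, ∀ t : ℚ, 0 ≤ t → Q x ≤ m (x + (t:ℝ) • y) - (t:ℝ) * m y :=
      fun x t ht => csInf_le (hQbdd x) ⟨t, ht, rfl⟩
    have hQle_m : ∀ x, Q x ≤ m x := by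
      intro x
      have := hQle x 0 le_rfl
      push_cast at this
      simpa using this
    have hQexc : ∀ x, ∀ ε > (0:ℝ), ∃ t : ℚ, 0 ≤ t ∧ m (x + (t:ℝ) • y) - (t:ℝ) * m y < Q x + ε := by
      intro x ε hε
      obtain ⟨r, ⟨t, ht, rfl⟩, hr⟩ := exists_lt_of_csInf_lt (hQne x)
        (by linarith : Q x < Q x + ε)
      exact ⟨t, ht, hr⟩
    have hQF : Q ∈ F := by
      refine ⟨?_, ?_, fun u => le_trans (hQle_m u) (hm3 u)⟩
      · intro u v
        refine le_of_forall_pos_le_add ?_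
        intro ε hε
        obtain ⟨t1, ht1, ht1'⟩ := hQexc u (ε/2) (by linarith)
        obtain ⟨t2, ht2, ht2'⟩ := hQexc v (ε/2) (by linarith)
        have hQ3 := hQle (u + v) (t1 + t2) (by linarith)
        have hsplit : m (u + v + ((t1 + t2 : ℚ):ℝ) • y)
            ≤ m (u + (t1:ℝ) • y) + m (v + (t2:ℝ) • y) := by
          have := hm1 (u + (t1:ℝ) • y) (v + (t2:ℝ) • y)
          rw [show u + (t1:ℝ) • y + (v + (t2:ℝ) • y) = u + v + ((t1:ℝ) + (t2:ℝ)) • y by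
            rw [add_smul]; abel] at this
          push_cast
          exact this
        push_cast at hsplit
        push_cast at hQ3
        push_cast at ht1' ht2'
        linarith
      · intro c hc u
        have hcR : (0:ℝ) < (c:ℝ) := by exact_mod_cast hc
        have himg : ((fun t : ℚ => m ((c:ℝ) • u + (t:ℝ) • y) - (t:ℝ) * m y) '' {t : ℚ | 0 ≤ t})
            = (c:ℝ) • ((fun t : ℚ => m (u + (t:ℝ) • y) - (t:ℝ) * m y) '' {t : ℚ | 0 ≤ t}) := by
          ext r
          constructor
          · rintro ⟨t, ht, rfl⟩
            refine ⟨m (u + ((t/c : ℚ):ℝ) • y) - ((t/c : ℚ):ℝ) * m y,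
              ⟨t/c, div_nonneg ht (le_of_lt hc), rfl⟩, ?_⟩
            have hpt : (c:ℝ) • (u + ((t/c : ℚ):ℝ) • y) = (c:ℝ) • u + (t:ℝ) • y := by
              rw [smul_add, smul_smul]
              congr 2
              push_cast
              field_simp
            have := hm2 c hc (u + ((t/c : ℚ):ℝ) • y)
            rw [hpt] at this
            simp only [smul_eq_mul]
            have hcoef : (c:ℝ) * (((t/c : ℚ):ℝ) * m y) = (t:ℝ) * m y := by
              push_cast
              field_simp
            rw [mul_sub, ← this, hcoef]
          · rintro ⟨r', ⟨t, ht, rfl⟩, rfl⟩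
            refine ⟨c * t, mul_nonneg (le_of_lt hc) ht, ?_⟩
            have hpt : (c:ℝ) • (u + (t:ℝ) • y) = (c:ℝ) • u + ((c*t : ℚ):ℝ) • y := by
              rw [smul_add, smul_smul]
              push_cast
              ring_nf
            have := hm2 c hc (u + (t:ℝ) • y)
            rw [hpt] at this
            simp only [smul_eq_mul]
            rw [this]
            push_cast
            ring
        rw [hQdef]
        simp only
        rw [himg, Real.sInf_smul_of_nonneg (le_of_lt hcR), smul_eq_mul]
    have hmQ : ∀ x, m x ≤ Q x := hmmin Q hQF hQle_m
    have h1 := hQle (-y) 1 (by norm_num)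
    have h2 := hmQ (-y)
    push_cast at h1
    rw [one_smul, neg_add_cancel, hm0] at h1
    linarith
  have hadd : ∀ u v, m (u + v) = m u + m v := by
    intro u v
    refine le_antisymm (hm1 u v) ?_
    have h1 := hm1 (u + v) (-v)
    rw [show u + v + -v = u by abel] at h1
    have h2 := hneg v
    have h3 := hneg (-v)
    rw [neg_neg] at h3
    linarith
  refine ⟨m, hadd, ?_⟩
  intro x hx
  have h1S : (1:ℚ) ∈ S (x - x0) := by
    refine ⟨one_pos, ?_⟩
    push_cast
    rw [one_smul, add_sub_cancel]
    exact hx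
  have := hple (x - x0) 1 h1S
  have hm4 := hm3 (x - x0)
  rw [hslope] at this
  simp only at this
  push_cast at this
  rw [one_smul, add_sub_cancel, div_one] at this
  linarith


end Support


open Set Filter Topology

/-- In a topological vector space over `ℝ` which is a Baire space, the Kuczma–Ger classes
`𝓐_X` and `𝓑_X` coincide: a set `A` makes every mid-convex function, defined on an open
convex set containing `A` and bounded above on `A`, continuous if and only if it makes every
additive functional bounded above on `A` continuous. -/
theorem statement19 {X : Type*} [TopologicalSpace X] [AddCommGroup X] [Module ℝ X]
    [IsTopologicalAddGroup X] [ContinuousSMul ℝ X] [BaireSpace X] (A : Set X) :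
    (∀ (D : Set X) (f : X → ℝ), IsOpen D → Convex ℝ D → A ⊆ D →
      (∀ x ∈ D, ∀ y ∈ D, f (((1 : ℝ) / 2) • (x + y)) ≤ (f x + f y) / 2) →
      BddAbove (f '' A) → ContinuousOn f D) ↔
    (∀ f : X → ℝ, (∀ x y : X, f (x + y) = f x + f y) → BddAbove (f '' A) → Continuous f) := by
  constructor
  · -- (i) → (ii): an additive function is mid-convex on `univ`
    intro hA f hadd hbdd
    have hmid : ∀ x ∈ (univ : Set X), ∀ y ∈ (univ : Set X),
        f (((1 : ℝ) / 2) • (x + y)) ≤ (f x + f y) / 2 := by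
      intro x _ y _
      have h2 : f (((1:ℝ)/2) • (x + y)) + f (((1:ℝ)/2) • (x + y)) = f (x + y) := by
        rw [← hadd]
        congr 1
        rw [← add_smul]
        norm_num
      rw [hadd x y] at h2
      linarith
    have := hA univ f isOpen_univ convex_univ (subset_univ A) hmid hbdd
    rwa [continuousOn_univ] at this
  · -- (ii) → (i)
    intro hB D f hDo hDc hAD hmid hbdd
    have hrat : ∀ (q : ℚ), 0 ≤ q → q ≤ 1 → ∀ x ∈ D, ∀ y ∈ D,
        f ((q:ℝ) • x + (1 - (q:ℝ)) • y) ≤ (q:ℝ) * f x + (1 - (q:ℝ)) * f y :=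
      fun q h0 h1 x hx y hy => midconvex_rat hDc hmid h0 h1 hx hy
    have hg0 : ∀ (g : X → ℝ), (∀ u v, g (u + v) = g u + g v) → g 0 = 0 := by
      intro g hgadd
      have := hgadd 0 0
      rw [add_zero] at this
      linarith
    -- continuous linear supports at every point of D
    have hsupp : ∀ z ∈ D, ∃ g : X → ℝ, Continuous g ∧ (∀ (r : ℝ) (u : X), g (r • u) = r * g u) ∧
        (∀ u v, g (u + v) = g u + g v) ∧ ∀ x ∈ D, f z + g (x - z) ≤ f x := by
      intro z hz
      obtain ⟨g, hgadd, hgsupp⟩ := exists_additive_support hDo hDc hrat hz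
      have hgbdd : BddAbove (g '' A) := by
        obtain ⟨M, hM⟩ := hbdd
        refine ⟨M - f z + g z, ?_⟩
        rintro r ⟨a, ha, rfl⟩
        have h1 : f z + g (a - z) ≤ f a := hgsupp a (hAD ha)
        have h2 : f a ≤ M := hM ⟨a, ha, rfl⟩
        have h3 : g (a - z) + g z = g a := by
          rw [← hgadd]
          congr 1
          abel
        linarith
      have hgc : Continuous g := hB g hgadd hgbdd
      have hghom : ∀ (r : ℝ) (u : X), g (r • u) = r * g u := by
        intro r u
        have := map_real_smul (AddMonoidHom.mk' g hgadd) hgc r u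
        simpa using this
      exact ⟨g, hgc, hghom, hgadd, hgsupp⟩
    -- f is (truly) convex on D
    have hconv : ∀ x ∈ D, ∀ y ∈ D, ∀ t : ℝ, 0 ≤ t → t ≤ 1 →
        f ((1 - t) • x + t • y) ≤ (1 - t) * f x + t * f y := by
      intro x hx y hy t ht0 ht1
      set w := (1 - t) • x + t • y with hw
      have hwD : w ∈ D := hDc hx hy (by linarith) ht0 (by ring)
      obtain ⟨g, -, hghom, hgadd, hgsupp⟩ := hsupp w hwD
      have h1 := hgsupp x hx
      have h2 := hgsupp y hy
      have hkey : (1 - t) * g (x - w) + t * g (y - w) = 0 := by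
        rw [← hghom (1 - t), ← hghom t, ← hgadd]
        have hcomb : (1 - t) • (x - w) + t • (y - w) = 0 := by
          rw [hw]
          module
        rw [hcomb, hg0 g hgadd]
      have h1' := mul_le_mul_of_nonneg_left h1 (by linarith : (0:ℝ) ≤ 1 - t)
      have h2' := mul_le_mul_of_nonneg_left h2 ht0
      nlinarith [h1', h2', hkey]
    -- continuity at every point
    intro z hz
    suffices h : ContinuousAt f z by exact h.continuousWithinAt
    -- Baire category argument: some closed sublevel set has interior
    obtain ⟨K, hK𝓝, hKcl, hKD⟩ := exists_mem_nhds_isClosed_subset (hDo.mem_nhds hz)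
    set G : ℕ → Set X := fun n => {x ∈ K | f x ≤ (n:ℝ)} with hG
    have hGcl : ∀ n, IsClosed (G n) := by
      intro n
      rw [← isOpen_compl_iff, isOpen_iff_mem_nhds]
      intro x hx
      by_cases hxK : x ∈ K
      · have hxD : x ∈ D := hKD hxK
        have hfx : (n:ℝ) < f x := by
          by_contra hc
          exact hx ⟨hxK, not_lt.1 hc⟩
        obtain ⟨g, hgc, hghom, hgadd, hgsupp⟩ := hsupp x hxD
        have hcont : Continuous (fun w : X => f x + g (w - x)) :=
          continuous_const.add (hgc.comp (continuous_id.sub continuous_const))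
        have hVopen : IsOpen {w : X | (n:ℝ) < f x + g (w - x)} :=
          isOpen_lt continuous_const hcont
        have hxV : x ∈ {w : X | (n:ℝ) < f x + g (w - x)} := by
          simp only [mem_setOf_eq, sub_self, hg0 g hgadd]
          simpa using hfx
        refine mem_of_superset (hVopen.mem_nhds hxV) ?_
        intro w hw hwG
        have hwD : w ∈ D := hKD hwG.1
        have hsup := hgsupp w hwD
        have : (n:ℝ) < f w := lt_of_lt_of_le hw hsup
        exact absurd hwG.2 (not_le.2 this)
      · exact mem_of_superset (hKcl.isOpen_compl.mem_nhds hxK)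
          (fun w hw hwG => hw hwG.1)
    have hUex : ∃ n : ℕ, (interior (G n)).Nonempty := by
      by_contra hno
      push_neg at hno
      have hdense : ∀ n, Dense ((G n)ᶜ) := by
        intro n
        rw [← interior_eq_empty_iff_dense_compl]
        exact hno n
      have hd := dense_iInter_of_isOpen (fun n => (hGcl n).isOpen_compl) hdense
      have hKint : (interior K).Nonempty := ⟨z, mem_interior_iff_mem_nhds.2 hK𝓝⟩
      obtain ⟨x, hx1, hx2⟩ := hd.exists_mem_open isOpen_interior hKint
      have hxK : x ∈ K := interior_subset hx2
      obtain ⟨n, hn⟩ := exists_nat_ge (f x)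
      have hxGn : x ∈ G n := ⟨hxK, hn⟩
      exact (mem_iInter.1 hx1 n) hxGn
    obtain ⟨n, u0, hu0U⟩ := hUex
    set U : Set X := interior (G n) with hU
    have hUopen : IsOpen U := isOpen_interior
    have hUD : U ⊆ D := fun x hx => hKD (interior_subset hx).1
    have hUb : ∀ x ∈ U, f x ≤ (n:ℝ) := fun x hx => (interior_subset hx).2
    -- find ρ > 1 with u0 + ρ • (z - u0) ∈ D
    have hφc : Continuous (fun r : ℝ => u0 + r • (z - u0)) :=
      continuous_const.add (continuous_id.smul continuous_const)
    have h1mem : (1:ℝ) ∈ (fun r : ℝ => u0 + r • (z - u0)) ⁻¹' D := by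
      show u0 + (1:ℝ) • (z - u0) ∈ D
      rw [one_smul, show u0 + (z - u0) = z by abel]
      exact hz
    obtain ⟨ε₀, hε₀, hball⟩ := Metric.isOpen_iff.1 (hDo.preimage hφc) 1 h1mem
    set ρ : ℝ := 1 + min ε₀ 1 / 2 with hρdef
    have hmin0 : 0 < min ε₀ 1 := lt_min hε₀ one_pos
    have hρ1 : 1 < ρ := by rw [hρdef]; linarith
    have hρ0 : 0 < ρ := by linarith
    have hz'D : u0 + ρ • (z - u0) ∈ D := by
      refine hball ?_
      rw [Metric.mem_ball, Real.dist_eq, hρdef]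
      rw [show 1 + min ε₀ 1 / 2 - 1 = min ε₀ 1 / 2 by ring,
        abs_of_pos (by linarith)]
      have := min_le_left ε₀ 1
      linarith
    set z' : X := u0 + ρ • (z - u0) with hz'def
    set s : ℝ := 1 - 1/ρ with hsdef
    have hinv1 : 1/ρ < 1 := by rw [div_lt_one hρ0]; exact hρ1
    have hinv0 : 0 < 1/ρ := by positivity
    have hs0 : 0 < s := by rw [hsdef]; linarith
    have hs1 : s < 1 := by rw [hsdef]; linarith
    -- the upper bound spreads to a neighborhood of z
    have hbound : ∀ w : X, u0 + w ∈ U →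
        z + s • w ∈ D ∧ f (z + s • w) ≤ (1/ρ) * f z' + s * n := by
      intro w hwU
      have hρne : ρ ≠ 0 := ne_of_gt hρ0
      have heq : (1 - s) • z' + s • (u0 + w) = z + s • w := by
        rw [hz'def, hsdef]
        match_scalars <;> field_simp <;> ring
      have hmem : (1 - s) • z' + s • (u0 + w) ∈ D :=
        hDc hz'D (hUD hwU) (by linarith) hs0.le (by ring)
      have hfb := hconv z' hz'D (u0 + w) (hUD hwU) s hs0.le hs1.le
      rw [heq] at hfb hmem
      refine ⟨hmem, ?_⟩
      have hfu : f (u0 + w) ≤ (n:ℝ) := hUb _ hwU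
      have h1s : 1 - s = 1/ρ := by rw [hsdef]; ring
      have := mul_le_mul_of_nonneg_left hfu hs0.le
      calc f (z + s • w) ≤ (1 - s) * f z' + s * f (u0 + w) := hfb
        _ ≤ (1/ρ) * f z' + s * n := by rw [h1s]; exact add_le_add le_rfl this
    -- an open neighborhood of z with an upper bound for f
    set B : ℝ := max ((1/ρ) * f z' + s * n) (f z) with hBdef
    set O : Set X := (fun v : X => u0 + s⁻¹ • (v - z)) ⁻¹' U with hOdef
    have hOopen : IsOpen O := hUopen.preimage
      (continuous_const.add ((continuous_id.sub continuous_const).const_smul _))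
    have hzO : z ∈ O := by
      show u0 + s⁻¹ • (z - z) ∈ U
      rw [sub_self, smul_zero, add_zero]
      exact hu0U
    have hsne : s ≠ 0 := ne_of_gt hs0
    have hOD : O ⊆ D := by
      intro v hv
      have h := (hbound (s⁻¹ • (v - z)) hv).1
      rwa [smul_inv_smul₀ hsne, show z + (v - z) = v by abel] at h
    have hOb : ∀ v ∈ O, f v ≤ B := by
      intro v hv
      have h := (hbound (s⁻¹ • (v - z)) hv).2
      rw [smul_inv_smul₀ hsne, show z + (v - z) = v by abel] at h
      exact le_trans h (le_max_left _ _)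
    -- symmetrize
    set O' : Set X := O ∩ (fun v : X => z + (z - v)) ⁻¹' O with hO'def
    have hO'open : IsOpen O' := hOopen.inter
      (hOopen.preimage (continuous_const.add (continuous_const.sub continuous_id)))
    have hzO' : z ∈ O' := ⟨hzO, by
      show z + (z - z) ∈ O
      rw [sub_self, add_zero]
      exact hzO⟩
    have hBz : f z ≤ B := le_max_right _ _
    clear_value s ρ z' B
    -- continuity at z
    refine Metric.tendsto_nhds.2 ?_
    intro ε hε
    have hBfz : 0 ≤ B - f z := by linarith
    set t : ℝ := min 1 (ε / (2 * (B - f z + 1))) with htdef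
    have ht0 : 0 < t := lt_min one_pos (by positivity)
    have ht1 : t ≤ 1 := min_le_left _ _
    have htb : t * (B - f z) < ε := by
      have h1 : t ≤ ε / (2 * (B - f z + 1)) := min_le_right _ _
      have h2 : t * (B - f z) ≤ ε / (2 * (B - f z + 1)) * (B - f z) :=
        mul_le_mul_of_nonneg_right h1 hBfz
      have h3 : ε / (2 * (B - f z + 1)) * (B - f z) < ε := by
        rw [div_mul_eq_mul_div, div_lt_iff₀ (by positivity)]
        nlinarith
      linarith
    clear_value t
    set V : Set X := (fun v : X => z + t⁻¹ • (v - z)) ⁻¹' O' with hVdef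
    have hVopen : IsOpen V := hO'open.preimage
      (continuous_const.add ((continuous_id.sub continuous_const).const_smul _))
    have hzV : z ∈ V := by
      show z + t⁻¹ • (z - z) ∈ O'
      rw [sub_self, smul_zero, add_zero]
      exact hzO'
    have htne : t ≠ 0 := ne_of_gt ht0
    filter_upwards [hVopen.mem_nhds hzV] with v hv
    set w : X := t⁻¹ • (v - z) with hwdef
    have hw1 : z + w ∈ O' := hv
    have hveq : v = z + t • w := by
      rw [hwdef, smul_inv_smul₀ htne]
      abel
    have hzwO : z + w ∈ O := hw1.1
    have hzwD : z + w ∈ D := hOD hzwO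
    have hzw' : z - w ∈ O := by
      have h := hw1.2
      simp only [Set.mem_preimage] at h
      rwa [show z + (z - (z + w)) = z - w by abel] at h
    have hzw'D : z - w ∈ D := hOD hzw'
    have hfzw : f (z + w) ≤ B := hOb _ hzwO
    have hfzw' : f (z - w) ≤ B := hOb _ hzw'
    have hvD : v ∈ D := by
      have h : (1 - t) • z + t • (z + w) ∈ D := hDc hz hzwD (by linarith) ht0.le (by ring)
      rw [hveq]
      rwa [show (1 - t) • z + t • (z + w) = z + t • w by module] at h
    -- upper estimate
    have hup : f v ≤ f z + t * (B - f z) := by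
      have h := hconv z hz (z + w) hzwD t ht0.le ht1
      rw [show (1 - t) • z + t • (z + w) = z + t • w by module] at h
      rw [hveq]
      have h4 := mul_le_mul_of_nonneg_left hfzw ht0.le
      calc f (z + t • w) ≤ (1 - t) * f z + t * f (z + w) := h
        _ ≤ f z + t * (B - f z) := by nlinarith
    -- lower estimate
    have hlow : f z - t * (B - f z) ≤ f v := by
      have h1t : (0:ℝ) < 1 + t := by linarith
      set τ : ℝ := t / (1 + t) with hτdef
      have hτ0 : 0 ≤ τ := by positivity
      have hτ1 : τ ≤ 1 := by
        rw [hτdef, div_le_one h1t]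
        linarith
      have h := hconv v hvD (z - w) hzw'D τ hτ0 hτ1
      have harg : (1 - τ) • v + τ • (z - w) = z := by
        rw [hveq, hτdef]
        match_scalars <;> field_simp <;> ring
      rw [harg] at h
      have h2 := mul_le_mul_of_nonneg_left h (le_of_lt h1t)
      have h3 : (1 + t) * ((1 - τ) * f v + τ * f (z - w)) = f v + t * f (z - w) := by
        rw [hτdef]
        field_simp
        ring
      rw [h3] at h2
      have h4 : t * f (z - w) ≤ t * B := mul_le_mul_of_nonneg_left hfzw' ht0.le
      linarith
    rw [Real.dist_eq, abs_sub_lt_iff]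
    constructor <;> linarith
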